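/- arXiv:2403.05013 — 2 statements merged into one kernel-verified Lean document; each statement's English description precedes it below -/
import Mathlib

section
/- Let q = 2^m > 2, let U be an orthogonal Buekenhout–Metz unital in PG(2, q²) with special point T_∞ = (0,1,0), and suppose F is a set of 7 points of U together with 7 lines forming a Fano plane (each line meets F in exactly 3 points, every two points of F lie on one of the 7 lines). Then T_∞ ∉ F. -/
lemma fano_core (m : ℕ) (K : Type) [Field K] (hc : CharP K 2)
    (a b u : K) (ha : a ≠ 0) (hb : b + b ^ (2 ^ m) ≠ 0) (hu : u ≠ 0)
    (hcard : ∀ x : K, x ^ ((2 ^ m) ^ 2) = x)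
    (hdisc : ∑ i ∈ Finset.range m,
        (a ^ (2 ^ m + 1) / (b + b ^ (2 ^ m)) ^ 2) ^ (2 ^ i) = 0)
    (hf : (a * u ^ 2 + b * u ^ (2 ^ m + 1)) ^ (2 ^ m)
        = a * u ^ 2 + b * u ^ (2 ^ m + 1)) : False := by
  haveI := hc
  haveI : Fact (Nat.Prime 2) := ⟨Nat.prime_two⟩
  have h2 : (2 : K) = 0 := by exact_mod_cast CharP.cast_eq_zero K 2
  have hadd : ∀ (n : ℕ) (x y : K), (x + y) ^ 2 ^ n = x ^ 2 ^ n + y ^ 2 ^ n :=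
    fun n x y => add_pow_char_pow x y 2 n
  set q := 2 ^ m with hq
  have hqq : ∀ x : K, (x ^ q) ^ q = x := by
    intro x
    rw [← pow_mul, ← pow_two, hcard]
  obtain ⟨c, hcdef⟩ : ∃ c : K, c = b + b ^ q := ⟨_, rfl⟩
  rw [← hcdef] at hdisc hb
  have huq : u ^ q ≠ 0 := pow_ne_zero _ hu
  have haq : a ^ q ≠ 0 := pow_ne_zero _ ha
  have key : a ^ q * (u ^ q) ^ 2 + b ^ q * (u * u ^ q) = a * u ^ 2 + b * (u * u ^ q) := by
    have e1 : u ^ (q + 1) = u ^ q * u := by rw [pow_succ]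
    have e2 : (a * u ^ 2 + b * u ^ (q + 1)) ^ q
        = a ^ q * (u ^ q) ^ 2 + b ^ q * (u * u ^ q) := by
      rw [hadd m, mul_pow, mul_pow, e1, mul_pow, hqq, ← pow_mul, ← pow_mul, mul_comm 2 q,
        pow_mul]
    rw [e2] at hf
    rw [hf, e1]; ring
  obtain ⟨z, hz⟩ : ∃ z : K, z = u ^ q / u := ⟨_, rfl⟩
  have hzne : z ≠ 0 := by rw [hz]; exact div_ne_zero huq hu
  have hz2 : a ^ q * z ^ 2 + c * z = a := by
    have h : (a ^ q * z ^ 2 + c * z) * u ^ 2 = a * u ^ 2 := by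
      rw [hz, hcdef]
      field_simp
      linear_combination key + (b * u * u ^ q) * h2
    exact mul_right_cancel₀ (pow_ne_zero 2 hu) h
  obtain ⟨t, ht⟩ : ∃ t : K, t = a ^ q * z / c := ⟨_, rfl⟩
  have htt : t ^ 2 + t = a ^ (q + 1) / c ^ 2 := by
    have e3 : t ^ 2 + t = a ^ q * (a ^ q * z ^ 2 + c * z) / c ^ 2 := by
      rw [ht]; field_simp
    rw [e3, hz2, pow_succ a q]
  have htq : t ^ q = t := by
    have tele : ∑ i ∈ Finset.range m, ((t ^ 2 + t) ^ 2 ^ i) = t ^ q - t := by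
      have hterm : ∀ i, (t ^ 2 + t) ^ 2 ^ i = t ^ 2 ^ (i + 1) - t ^ 2 ^ i := by
        intro i
        rw [hadd i, ← pow_mul, mul_comm 2 (2 ^ i), ← pow_succ]
        linear_combination (t ^ 2 ^ i) * h2
      rw [Finset.sum_congr rfl fun i _ => hterm i, Finset.sum_range_sub (fun i => t ^ 2 ^ i),
        pow_zero, pow_one]
    rw [htt] at tele
    rw [hdisc] at tele
    linear_combination -tele
  have hnorm : z ^ q * z = 1 := by
    rw [hz, div_pow, hqq]
    field_simp
  have hcq : c ^ q = c := by
    rw [hcdef, hadd m, hqq]; ring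
  have hzt : z = c * t / a ^ q := by rw [ht]; field_simp
  have hzq : z ^ q = c * t / a := by
    rw [hzt, div_pow, mul_pow, hcq, htq, hqq]
  rw [hzq, hzt] at hnorm
  have e4 : c ^ 2 * t ^ 2 = a ^ (q + 1) := by
    field_simp at hnorm
    rw [pow_succ]
    linear_combination hnorm
  have htz : t = 0 := by
    have e5 : t ^ 2 + t = t ^ 2 := by
      rw [htt, ← e4]
      field_simp
    linear_combination e5
  rw [htz] at e4
  simp at e4
  exact pow_ne_zero (q + 1) ha e4.symm

/-- Let `q = 2^m > 2` and let `U = U_{a,b}` be an orthogonal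
Buekenhout–Metz unital in `PG(2, q²)` (so the discriminant
`d = a^{q+1}/(b+b^q)²` has absolute trace 0), with special point
`T_∞ = (0,1,0)`.  If seven points of `U` together with seven lines form a
Fano plane (points and lines pairwise distinct as projective objects, each
line meeting the seven points in exactly 3 of them, every two of the points
on one of the lines), then `T_∞` is not among the seven points. -/
theorem fano_bm_stmt12 (m : ℕ) (hm : 2 ≤ m) (K : Type) [Field K] [Fintype K]
    [DecidableEq K] (hK : Fintype.card K = (2 ^ m) ^ 2)
    (a b : K) (ha : a ≠ 0) (hb : b + b ^ (2 ^ m) ≠ 0)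
    (hdisc : ∑ i ∈ Finset.range m,
        (a ^ (2 ^ m + 1) / (b + b ^ (2 ^ m)) ^ 2) ^ (2 ^ i) = 0)
    (P : Fin 7 → Fin 3 → K) (L : Fin 7 → Fin 3 → K)
    (hP0 : ∀ j, P j ≠ 0) (hL0 : ∀ i, L i ≠ 0)
    (hPdist : ∀ j j' : Fin 7, (∃ c : K, c ≠ 0 ∧ P j = c • P j') → j = j')
    (hLdist : ∀ i i' : Fin 7, (∃ c : K, c ≠ 0 ∧ L i = c • L i') → i = i')
    (hline3 : ∀ i : Fin 7,
      (Finset.univ.filter (fun j : Fin 7 => ∑ t, L i t * P j t = 0)).card = 3)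
    (hcover : ∀ j j' : Fin 7, j ≠ j' →
      ∃ i : Fin 7, (∑ t, L i t * P j t = 0) ∧ (∑ t, L i t * P j' t = 0))
    (hU : ∀ j : Fin 7,
      (∃ c x r : K, c ≠ 0 ∧ r ^ (2 ^ m) = r ∧
          P j = c • ![x, a * x ^ 2 + b * x ^ (2 ^ m + 1) + r, 1]) ∨
      (∃ c : K, c ≠ 0 ∧ P j = c • ![0, 1, 0])) :
    ∀ j : Fin 7, ¬ ∃ c : K, c ≠ 0 ∧ P j = c • ![(0 : K), 1, 0] := by
  intro j0 hex
  obtain ⟨c0, hc0, hPj0⟩ := hex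
  -- characteristic 2
  have hchar : CharP K 2 := by
    have hp : (ringChar K).Prime := CharP.char_is_prime K _
    obtain ⟨n, hn⟩ := FiniteField.card K (ringChar K)
    have hd : ringChar K ∣ 2 := by
      have h2 : ringChar K ∣ 2 ^ (m * 2) := by
        rw [pow_mul, ← hK, hn.2]; exact dvd_pow_self _ (by positivity)
      exact hp.dvd_of_dvd_pow h2
    have : ringChar K = 2 := (Nat.prime_dvd_prime_iff_eq hp Nat.prime_two).1 hd
    rw [← this]; exact ringChar.charP K
  haveI := hchar
  haveI : Fact (Nat.Prime 2) := ⟨Nat.prime_two⟩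
  have h2 : (2 : K) = 0 := by exact_mod_cast CharP.cast_eq_zero K 2
  have hadd : ∀ (n : ℕ) (x y : K), (x + y) ^ 2 ^ n = x ^ 2 ^ n + y ^ 2 ^ n :=
    fun n x y => add_pow_char_pow x y 2 n
  have hcardK : ∀ x : K, x ^ ((2 ^ m) ^ 2) = x := fun x => by
    rw [← hK]; exact FiniteField.pow_card x
  have hneq : ∀ s t : K, s ≠ t → s + t ≠ 0 := by
    intro s t hst h
    apply hst
    have : s - t = 0 := by linear_combination h - t * h2
    exact sub_eq_zero.1 this
  -- affine data for the points other than j0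
  have haff : ∀ j : Fin 7, ∃ c x r : K, c ≠ 0 ∧ r ^ (2 ^ m) = r ∧
      (j ≠ j0 → P j = c • ![x, a * x ^ 2 + b * x ^ (2 ^ m + 1) + r, 1]) := by
    intro j
    rcases hU j with ⟨c, x, r, hc, hr, hp⟩ | ⟨c, hc, hp⟩
    · exact ⟨c, x, r, hc, hr, fun _ => hp⟩
    · refine ⟨1, 0, 0, one_ne_zero, by simp, fun hne => absurd ?_ hne⟩
      apply hPdist
      refine ⟨c * c0⁻¹, mul_ne_zero hc (inv_ne_zero hc0), ?_⟩
      rw [hp, hPj0, smul_smul]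
      congr 1
      field_simp
  choose cc xx rr hcc hrr hPaff using haff
  -- incidence conditions in coordinates
  have dot3 : ∀ (i : Fin 7) (v : Fin 3 → K) (c : K),
      (∑ t, L i t * (c • v) t) = c * (L i 0 * v 0 + L i 1 * v 1 + L i 2 * v 2) := by
    intro i v c
    rw [Fin.sum_univ_three]
    simp only [Pi.smul_apply, smul_eq_mul]
    ring
  have dotj : ∀ (i j : Fin 7), j ≠ j0 →
      ((∑ t, L i t * P j t = 0) ↔
        L i 0 * xx j + L i 1 * (a * xx j ^ 2 + b * xx j ^ (2 ^ m + 1) + rr j) + L i 2 = 0) := by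
    intro i j hj
    rw [hPaff j hj, dot3]
    rw [mul_eq_zero]
    simp [hcc j, Matrix.cons_val_zero, Matrix.cons_val_one, Matrix.head_cons]
  have dot0 : ∀ i : Fin 7, ((∑ t, L i t * P j0 t = 0) ↔ L i 1 = 0) := by
    intro i
    rw [hPj0, dot3, mul_eq_zero]
    simp [hc0, Matrix.cons_val_zero, Matrix.cons_val_one, Matrix.head_cons]
  -- if line is vertical (L i 1 = 0) and passes through an affine point then L i 0 ≠ 0
  have hLnz : ∀ (i : Fin 7) (x0 : K), L i 1 = 0 → L i 0 * x0 + L i 2 = 0 → L i 0 ≠ 0 := by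
    intro i x0 h1 h0 hq0
    apply hL0 i
    funext t
    have h02 : L i 2 = 0 := by linear_combination h0 - x0 * hq0
    fin_cases t
    · exact hq0
    · exact h1
    · exact h02
  -- distinct points with the same x have distinct r
  have hrne : ∀ j j' : Fin 7, j ≠ j0 → j' ≠ j0 → j ≠ j' → xx j = xx j' → rr j ≠ rr j' := by
    intro j j' hj hj' hjj' hx hr
    apply hjj'
    apply hPdist
    refine ⟨cc j * (cc j')⁻¹, mul_ne_zero (hcc j) (inv_ne_zero (hcc j')), ?_⟩
    rw [hPaff j hj, hPaff j' hj', smul_smul, hx, hr]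
    congr 1
    exact (inv_mul_cancel_right₀ (hcc j') (cc j)).symm
  -- same x on a common line forces vertical line
  have hsame : ∀ (i j j' : Fin 7), j ≠ j0 → j' ≠ j0 → j ≠ j' →
      (∑ t, L i t * P j t = 0) → (∑ t, L i t * P j' t = 0) → xx j = xx j' → L i 1 = 0 := by
    intro i j j' hj hj' hjj' hon hon' hx
    have e1 := (dotj i j hj).1 hon
    have e2 := (dotj i j' hj').1 hon'
    rw [hx] at e1
    have : L i 1 * (rr j - rr j') = 0 := by linear_combination e1 - e2
    rcases mul_eq_zero.1 this with h | h
    · exact h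
    · exact absurd (sub_eq_zero.1 h) (hrne j j' hj hj' hjj' hx)
  -- vertical line forces same x
  have hvert : ∀ (i j j' : Fin 7), j ≠ j0 → j' ≠ j0 → L i 1 = 0 →
      (∑ t, L i t * P j t = 0) → (∑ t, L i t * P j' t = 0) → xx j = xx j' := by
    intro i j j' hj hj' h1 hon hon'
    have e1 := (dotj i j hj).1 hon
    have e2 := (dotj i j' hj').1 hon'
    have e1' : L i 0 * xx j + L i 2 = 0 := by
      linear_combination e1 - (a * xx j ^ 2 + b * xx j ^ (2 ^ m + 1) + rr j) * h1
    have e2' : L i 0 * xx j' + L i 2 = 0 := by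
      linear_combination e2 - (a * xx j' ^ 2 + b * xx j' ^ (2 ^ m + 1) + rr j') * h1
    have hL0i := hLnz i (xx j) h1 e1'
    apply mul_left_cancel₀ hL0i
    linear_combination e1' - e2'
  -- membership of a point with same x on a vertical line
  have hvmem : ∀ (i j j' : Fin 7), j ≠ j0 → j' ≠ j0 → L i 1 = 0 →
      (∑ t, L i t * P j t = 0) → xx j' = xx j → (∑ t, L i t * P j' t = 0) := by
    intro i j j' hj hj' h1 hon hx
    have e1 := (dotj i j hj).1 hon
    rw [dotj i j' hj']
    linear_combination e1 + ((a * xx j' ^ 2 + b * xx j' ^ (2 ^ m + 1) + rr j')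
      - (a * xx j ^ 2 + b * xx j ^ (2 ^ m + 1) + rr j)) * h1 + (L i 0) * hx
  -- four distinct points cannot lie on one line
  have card4 : ∀ (i : Fin 7) (p1 p2 p3 p4 : Fin 7), p1 ≠ p2 → p1 ≠ p3 → p1 ≠ p4 →
      p2 ≠ p3 → p2 ≠ p4 → p3 ≠ p4 →
      (∑ t, L i t * P p1 t = 0) → (∑ t, L i t * P p2 t = 0) →
      (∑ t, L i t * P p3 t = 0) → (∑ t, L i t * P p4 t = 0) → False := by
    intro i p1 p2 p3 p4 h12 h13 h14 h23 h24 h34 o1 o2 o3 o4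
    have hsub : ({p1, p2, p3, p4} : Finset (Fin 7)) ⊆
        Finset.univ.filter (fun j : Fin 7 => ∑ t, L i t * P j t = 0) := by
      intro t ht
      simp only [Finset.mem_insert, Finset.mem_singleton] at ht
      rcases ht with rfl | rfl | rfl | rfl <;> simp only [Finset.mem_filter, Finset.mem_univ,
        true_and] <;> assumption
    have hcard : ({p1, p2, p3, p4} : Finset (Fin 7)).card = 4 := by
      rw [Finset.card_insert_of_notMem (by simp [h12, h13, h14]),
        Finset.card_insert_of_notMem (by simp [h23, h24]),
        Finset.card_insert_of_notMem (by simp [h34]), Finset.card_singleton]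
    have := Finset.card_le_card hsub
    rw [hcard, hline3 i] at this
    omega
  -- a third point on each line
  have third : ∀ (i j j' : Fin 7), j ≠ j' →
      (∑ t, L i t * P j t = 0) → (∑ t, L i t * P j' t = 0) →
      ∃ e : Fin 7, e ≠ j ∧ e ≠ j' ∧ (∑ t, L i t * P e t = 0) := by
    intro i j j' hne hon hon'
    set s := Finset.univ.filter (fun k : Fin 7 => ∑ t, L i t * P k t = 0) with hs
    have hj : j ∈ s := by simp [hs, hon]
    have hj' : j' ∈ s.erase j := by simp [hs, hon', Ne.symm hne]
    have hc1 : (s.erase j).card = 2 := by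
      rw [Finset.card_erase_of_mem hj, hline3 i]
    have hc2 : ((s.erase j).erase j').card = 1 := by
      rw [Finset.card_erase_of_mem hj', hc1]
    obtain ⟨e, he⟩ := Finset.card_pos.1 (by rw [hc2]; norm_num)
    rw [Finset.mem_erase, Finset.mem_erase] at he
    obtain ⟨hej', hej, hes⟩ := he
    refine ⟨e, hej, hej', ?_⟩
    simpa [hs] using hes
  -- no three distinct affine points share the same x-coordinate
  have claimM : ∀ j k k' : Fin 7, j ≠ j0 → k ≠ j0 → k' ≠ j0 → j ≠ k → j ≠ k' → k ≠ k' →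
      xx k = xx j → xx k' = xx j → False := by
    intro j k k' hj hk hk' hjk hjk' hkk' hxk hxk'
    obtain ⟨i, oij, oik⟩ := hcover j k hjk
    have h1 : L i 1 = 0 := hsame i j k hj hk hjk oij oik hxk.symm
    have oij0 : (∑ t, L i t * P j0 t = 0) := (dot0 i).2 h1
    have oik' : (∑ t, L i t * P k' t = 0) := hvmem i j k' hj hk' h1 oij hxk'
    exact card4 i j0 j k k' (Ne.symm hj) (Ne.symm hk) (Ne.symm hk') hjk hjk' hkk'
      oij0 oij oik oik'
  -- every affine point has a mate with the same x
  have mate : ∀ j : Fin 7, j ≠ j0 → ∃ k : Fin 7, k ≠ j0 ∧ k ≠ j ∧ xx k = xx j := by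
    intro j hj
    obtain ⟨i, oi0, oij⟩ := hcover j0 j (Ne.symm hj)
    have h1 : L i 1 = 0 := (dot0 i).1 oi0
    obtain ⟨e, hej0, hej, oie⟩ := third i j0 j (Ne.symm hj) oi0 oij
    exact ⟨e, hej0, hej, hvert i e j hej0 hj h1 oie oij⟩
  -- pick an element avoiding five given ones
  have pick : ∀ x y z u v : Fin 7, ∃ w : Fin 7, w ≠ x ∧ w ≠ y ∧ w ≠ z ∧ w ≠ u ∧ w ≠ v := by
    intro x y z u v
    by_contra h
    push_neg at h
    have hsub : (Finset.univ : Finset (Fin 7)) ⊆ {x, y, z, u, v} := by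
      intro w _
      simp only [Finset.mem_insert, Finset.mem_singleton]
      by_cases h1 : w = x; · tauto
      by_cases h2 : w = y; · tauto
      by_cases h3 : w = z; · tauto
      by_cases h4 : w = u; · tauto
      exact Or.inr (Or.inr (Or.inr (Or.inr (h w h1 h2 h3 h4))))
    have c1 := Finset.card_insert_le x ({y, z, u, v} : Finset (Fin 7))
    have c2 := Finset.card_insert_le y ({z, u, v} : Finset (Fin 7))
    have c3 := Finset.card_insert_le z ({u, v} : Finset (Fin 7))
    have c4 := Finset.card_insert_le u ({v} : Finset (Fin 7))
    have c5 : ({v} : Finset (Fin 7)).card = 1 := Finset.card_singleton v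
    have hle := Finset.card_le_card hsub
    have h7 : (Finset.univ : Finset (Fin 7)).card = 7 := by simp
    omega
  -- choose the six affine points
  obtain ⟨A, hA, -, -, -, -⟩ := pick j0 j0 j0 j0 j0
  obtain ⟨B, hB, hBA, hxB⟩ := mate A hA
  obtain ⟨C, hCj0, hCA, hCB, -, -⟩ := pick j0 A B B B
  obtain ⟨D, hD, hDC, hxD⟩ := mate C hCj0
  have hDA : D ≠ A := by
    intro h
    rw [h] at hxD
    exact claimM C A B hCj0 hA hB hCA hCB (Ne.symm hBA) hxD (by rw [hxB, hxD])
  have hDB : D ≠ B := by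
    intro h
    rw [h] at hxD
    exact claimM C A B hCj0 hA hB hCA hCB (Ne.symm hBA) (by rw [← hxB]; exact hxD) hxD
  obtain ⟨E, hEj0, hEA, hEB, hEC, hED⟩ := pick j0 A B C D
  obtain ⟨F, hF, hFE, hxF⟩ := mate E hEj0
  have hFA : F ≠ A := by
    intro h; rw [h] at hxF
    exact claimM E A B hEj0 hA hB hEA hEB (Ne.symm hBA) hxF (by rw [hxB, hxF])
  have hFB : F ≠ B := by
    intro h; rw [h] at hxF
    exact claimM E A B hEj0 hA hB hEA hEB (Ne.symm hBA) (by rw [← hxB]; exact hxF) hxF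
  have hFC : F ≠ C := by
    intro h; rw [h] at hxF
    exact claimM E C D hEj0 hCj0 hD hEC hED (Ne.symm hDC) hxF (by rw [hxD, hxF])
  have hFD : F ≠ D := by
    intro h; rw [h] at hxF
    exact claimM E C D hEj0 hCj0 hD hEC hED (Ne.symm hDC) (by rw [← hxD]; exact hxF) hxF
  -- x-coordinates of the three classes are distinct
  have hx12 : xx A ≠ xx C := by
    intro h
    exact claimM A B C hA hB hCj0 (Ne.symm hBA) (Ne.symm hCA) (Ne.symm hCB) hxB h.symm
  have hx13 : xx A ≠ xx E := by
    intro h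
    exact claimM A B E hA hB hEj0 (Ne.symm hBA) (Ne.symm hEA) (Ne.symm hEB) hxB h.symm
  have hx23 : xx C ≠ xx E := by
    intro h
    exact claimM C D E hCj0 hD hEj0 (Ne.symm hDC) (Ne.symm hEC) (Ne.symm hED) hxD h.symm
  -- the seven points are exactly j0 A B C D E F
  have hcard7 : ({j0, A, B, C, D, E, F} : Finset (Fin 7)).card = 7 := by
    rw [Finset.card_insert_of_notMem (by simp [Ne.symm hA, Ne.symm hB, Ne.symm hCj0,
          Ne.symm hD, Ne.symm hEj0, Ne.symm hF]),
      Finset.card_insert_of_notMem (by simp [Ne.symm hBA, Ne.symm hCA, Ne.symm hDA,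
          Ne.symm hEA, Ne.symm hFA]),
      Finset.card_insert_of_notMem (by simp [Ne.symm hCB, Ne.symm hDB, Ne.symm hEB,
          Ne.symm hFB]),
      Finset.card_insert_of_notMem (by simp [Ne.symm hDC, Ne.symm hEC, Ne.symm hFC]),
      Finset.card_insert_of_notMem (by simp [Ne.symm hED, Ne.symm hFD]),
      Finset.card_insert_of_notMem (by simp [Ne.symm hFE]), Finset.card_singleton]
  have huniv : ∀ t : Fin 7, t = j0 ∨ t = A ∨ t = B ∨ t = C ∨ t = D ∨ t = E ∨ t = F := by
    intro t
    have := Finset.eq_univ_of_card _ (by rw [hcard7]; simp)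
    have ht : t ∈ ({j0, A, B, C, D, E, F} : Finset (Fin 7)) := by
      rw [this]; exact Finset.mem_univ t
    simpa using ht
  -- transversal lines through points with different x-coordinates
  have tline : ∀ j j' : Fin 7, j ≠ j0 → j' ≠ j0 → j ≠ j' → xx j ≠ xx j' →
      ∃ (i e : Fin 7), (∑ t, L i t * P j t = 0) ∧ (∑ t, L i t * P j' t = 0) ∧
        (∑ t, L i t * P e t = 0) ∧ e ≠ j ∧ e ≠ j' ∧ e ≠ j0 ∧
        xx e ≠ xx j ∧ xx e ≠ xx j' := by
    intro j j' hj hj' hjj' hx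
    obtain ⟨i, oj, oj'⟩ := hcover j j' hjj'
    have hL1 : L i 1 ≠ 0 := by
      intro h1
      exact hx (hvert i j j' hj hj' h1 oj oj')
    obtain ⟨e, hej, hej', oe⟩ := third i j j' hjj' oj oj'
    have hej0 : e ≠ j0 := by
      intro h
      rw [h] at oe
      exact hL1 ((dot0 i).1 oe)
    refine ⟨i, e, oj, oj', oe, hej, hej', hej0, ?_, ?_⟩
    · intro hxe
      exact hL1 (hsame i e j hej0 hj hej oe oj hxe)
    · intro hxe
      exact hL1 (hsame i e j' hej0 hj' hej' oe oj' hxe)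
  -- classification of third points: only points with x = xx E remain
  have xclass : ∀ e : Fin 7, e ≠ j0 → xx e ≠ xx A → xx e ≠ xx C → xx e = xx E := by
    intro e he hxa hxc
    rcases huniv e with h | h | h | h | h | h | h
    · exact absurd h he
    · exact absurd (by rw [h]) hxa
    · exact absurd (by rw [h, hxB]) hxa
    · exact absurd (by rw [h]) hxc
    · exact absurd (by rw [h, hxD]) hxc
    · rw [h]
    · rw [h, hxF]
  have pairEF : ∀ e : Fin 7, e ≠ j0 → xx e = xx E → e = E ∨ e = F := by
    intro e he hxe
    by_contra h
    push_neg at h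
    exact claimM E F e hEj0 hF he (Ne.symm hFE) (fun hh => h.1 hh.symm)
      (fun hh => h.2 hh.symm) hxF hxe
  -- the three transversal lines
  obtain ⟨i1, e1, o1A, o1C, o1e, he1A, he1C, he1j0, hxe1A, hxe1C⟩ :=
    tline A C hA hCj0 (Ne.symm hCA) hx12
  have hxe1 : xx e1 = xx E := xclass e1 he1j0 hxe1A hxe1C
  have hxBD : xx B ≠ xx D := by rw [hxB, hxD]; exact hx12
  have hBD : B ≠ D := fun h => hDB h.symm
  obtain ⟨i2, e2, o2B, o2D, o2e, he2B, he2D, he2j0, hxe2B, hxe2D⟩ :=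
    tline B D hB hD hBD hxBD
  have hxe2 : xx e2 = xx E := by
    apply xclass e2 he2j0
    · rw [← hxB]; exact hxe2B
    · rw [← hxD]; exact hxe2D
  have hxAD : xx A ≠ xx D := by rw [hxD]; exact hx12
  have hAD : A ≠ D := fun h => hDA h.symm
  obtain ⟨i3, e3, o3A, o3D, o3e, he3A, he3D, he3j0, hxe3A, hxe3D⟩ :=
    tline A D hA hD hAD hxAD
  have hxe3 : xx e3 = xx E := by
    apply xclass e3 he3j0 hxe3A
    rw [← hxD]; exact hxe3D
  -- two distinct points determine a unique line
  have uline : ∀ (i i' j j' : Fin 7), j ≠ j0 → j' ≠ j0 → j ≠ j' →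
      (∑ t, L i t * P j t = 0) → (∑ t, L i t * P j' t = 0) →
      (∑ t, L i' t * P j t = 0) → (∑ t, L i' t * P j' t = 0) → i = i' := by
    intro i i' j j' hj hj' hjj' o1 o2 o3 o4
    have e1 := (dotj i j hj).1 o1
    have e2 := (dotj i j' hj').1 o2
    have e3 := (dotj i' j hj).1 o3
    have e4 := (dotj i' j' hj').1 o4
    by_cases hx : xx j = xx j'
    · -- vertical case
      have hA1 : L i 1 = 0 := hsame i j j' hj hj' hjj' o1 o2 hx
      have hB1 : L i' 1 = 0 := hsame i' j j' hj hj' hjj' o3 o4 hx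
      have e1' : L i 0 * xx j + L i 2 = 0 := by
        linear_combination e1 - (a * xx j ^ 2 + b * xx j ^ (2 ^ m + 1) + rr j) * hA1
      have e3' : L i' 0 * xx j + L i' 2 = 0 := by
        linear_combination e3 - (a * xx j ^ 2 + b * xx j ^ (2 ^ m + 1) + rr j) * hB1
      have hA0 : L i 0 ≠ 0 := hLnz i (xx j) hA1 e1'
      have hB0 : L i' 0 ≠ 0 := hLnz i' (xx j) hB1 e3'
      apply hLdist
      refine ⟨L i 0 * (L i' 0)⁻¹, mul_ne_zero hA0 (inv_ne_zero hB0), ?_⟩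
      funext t
      simp only [Pi.smul_apply, smul_eq_mul]
      fin_cases t
      · show L i 0 = L i 0 * (L i' 0)⁻¹ * L i' 0
        field_simp
      · show L i 1 = L i 0 * (L i' 0)⁻¹ * L i' 1
        rw [hA1, hB1, mul_zero]
      · show L i 2 = L i 0 * (L i' 0)⁻¹ * L i' 2
        have hr : L i 2 * L i' 0 = L i 0 * L i' 2 := by
          linear_combination (L i' 0) * e1' - (L i 0) * e3'
        field_simp
        linear_combination hr
    · -- non-vertical case
      have hA1 : L i 1 ≠ 0 := by
        intro h1
        exact hx (hvert i j j' hj hj' h1 o1 o2)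
      have hB1 : L i' 1 ≠ 0 := by
        intro h1
        exact hx (hvert i' j j' hj hj' h1 o3 o4)
      have h5 : (L i 0 * L i' 1 - L i 1 * L i' 0) * (xx j - xx j') = 0 := by
        linear_combination (L i' 1) * e1 - (L i' 1) * e2 - (L i 1) * e3 + (L i 1) * e4
      have hr1 : L i 0 * L i' 1 = L i 1 * L i' 0 := by
        rcases mul_eq_zero.1 h5 with h | h
        · exact sub_eq_zero.1 h
        · exact absurd (sub_eq_zero.1 h) hx
      have hr2 : L i 2 * L i' 1 = L i 1 * L i' 2 := by
        linear_combination (L i' 1) * e1 - (L i 1) * e3 - (xx j) * hr1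
      apply hLdist
      refine ⟨L i 1 * (L i' 1)⁻¹, mul_ne_zero hA1 (inv_ne_zero hB1), ?_⟩
      funext t
      simp only [Pi.smul_apply, smul_eq_mul]
      fin_cases t
      · show L i 0 = L i 1 * (L i' 1)⁻¹ * L i' 0
        field_simp
        linear_combination hr1
      · show L i 1 = L i 1 * (L i' 1)⁻¹ * L i' 1
        field_simp
      · show L i 2 = L i 1 * (L i' 1)⁻¹ * L i' 2
        field_simp
        linear_combination hr2
  -- the third points of the three transversals
  have he13 : e1 ≠ e3 := by
    intro h
    rw [← h] at o3e
    have := uline i1 i3 A e1 hA he1j0 (Ne.symm he1A) o1A o1e o3A o3e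
    rw [← this] at o3D
    exact card4 i1 A C e1 D (Ne.symm hCA) (Ne.symm he1A) hAD
      (Ne.symm he1C) (Ne.symm hDC)
      (fun h' => hx23 (by rw [← hxD, ← h']; exact hxe1))
      o1A o1C o1e o3D
  have he23 : e2 ≠ e3 := by
    intro h
    rw [← h] at o3e
    have := uline i2 i3 D e2 hD he2j0 (Ne.symm he2D) o2D o2e o3D o3e
    rw [← this] at o3A
    exact card4 i2 B D e2 A hBD (Ne.symm he2B) hBA
      (Ne.symm he2D) hDA (fun h' => hx13 (by rw [← h']; exact hxe2))
      o2B o2D o2e o3A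
  -- identify the third points
  have hEF1 := pairEF e1 he1j0 hxe1
  have hEF2 := pairEF e2 he2j0 hxe2
  have hEF3 := pairEF e3 he3j0 hxe3
  have he21 : e2 = e1 := by
    rcases hEF1 with h1 | h1 <;> rcases hEF2 with h2 | h2 <;> rcases hEF3 with h3 | h3 <;>
      first
        | exact h2.trans h1.symm
        | exact absurd (h1.trans h3.symm) he13
        | exact absurd (h2.trans h3.symm) he23
  -- line equation in coordinates
  have leq : ∀ (i j1 j2 j3 : Fin 7), j1 ≠ j0 → j2 ≠ j0 → j3 ≠ j0 → L i 1 ≠ 0 →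
      (∑ t, L i t * P j1 t = 0) → (∑ t, L i t * P j2 t = 0) → (∑ t, L i t * P j3 t = 0) →
      (xx j2 + xx j3) * (a * xx j1 ^ 2 + b * xx j1 ^ (2 ^ m + 1) + rr j1)
        + (xx j1 + xx j3) * (a * xx j2 ^ 2 + b * xx j2 ^ (2 ^ m + 1) + rr j2)
        + (xx j1 + xx j2) * (a * xx j3 ^ 2 + b * xx j3 ^ (2 ^ m + 1) + rr j3) = 0 := by
    intro i j1 j2 j3 h1 h2' h3 hL1 o1 o2 o3
    have e1 := (dotj i j1 h1).1 o1
    have e2 := (dotj i j2 h2').1 o2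
    have e3 := (dotj i j3 h3).1 o3
    have hmul : L i 1 *
        ((xx j2 + xx j3) * (a * xx j1 ^ 2 + b * xx j1 ^ (2 ^ m + 1) + rr j1)
          + (xx j1 + xx j3) * (a * xx j2 ^ 2 + b * xx j2 ^ (2 ^ m + 1) + rr j2)
          + (xx j1 + xx j2) * (a * xx j3 ^ 2 + b * xx j3 ^ (2 ^ m + 1) + rr j3)) = 0 := by
      linear_combination (xx j2 + xx j3) * e1 + (xx j1 + xx j3) * e2 + (xx j1 + xx j2) * e3
        - (L i 0 * (xx j1 * xx j2 + xx j1 * xx j3 + xx j2 * xx j3)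
           + L i 2 * (xx j1 + xx j2 + xx j3)) * h2
    rcases mul_eq_zero.1 hmul with h | h
    · exact absurd h hL1
    · exact h
  have hL11 : L i1 1 ≠ 0 := fun h => hx12 (hvert i1 A C hA hCj0 h o1A o1C)
  have hL21 : L i2 1 ≠ 0 := fun h => hxBD (hvert i2 B D hB hD h o2B o2D)
  have E1 := leq i1 A C e1 hA hCj0 he1j0 hL11 o1A o1C o1e
  rw [he21] at o2e
  have E2 := leq i2 B D e1 hB hD he1j0 hL21 o2B o2D o2e
  rw [hxe1] at E1
  rw [hxB, hxD, hxe1] at E2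
  -- the two same-x pairs have distinct r
  have hα : rr A + rr B ≠ 0 := hneq _ _ (hrne A B hA hB (Ne.symm hBA) hxB.symm)
  have hβ : rr C + rr D ≠ 0 := hneq _ _ (hrne C D hCj0 hD (Ne.symm hDC) hxD.symm)
  obtain ⟨u1, hu1e⟩ : ∃ u : K, u = xx C + xx E := ⟨_, rfl⟩
  have hu1ne : u1 ≠ 0 := by rw [hu1e]; exact hneq _ _ hx23
  have E12c : (xx C + xx E) * (rr A + rr B) = (xx A + xx E) * (rr C + rr D) := by
    linear_combination E1 - E2 + ((xx C + xx E) * rr B - (xx A + xx E) * rr C) * h2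
  obtain ⟨lam, hlam⟩ : ∃ l : K, l = (rr A + rr B) / (rr C + rr D) := ⟨_, rfl⟩
  have hlam0 : lam ≠ 0 := by rw [hlam]; exact div_ne_zero hα hβ
  have hlamq : lam ^ 2 ^ m = lam := by
    rw [hlam, div_pow, hadd m, hadd m, hrr A, hrr B, hrr C, hrr D]
  have hu2e : xx A + xx E = lam * u1 := by
    rw [hlam, hu1e, div_mul_eq_mul_div, eq_div_iff hβ]
    linear_combination -E12c
  have hx3e : xx E = xx A + lam * u1 := by linear_combination hu2e - xx A * h2
  have hx2e : xx C = xx A + (1 + lam) * u1 := by linear_combination hx3e - hu1e - xx E * h2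
  have hl1ne : (1 : K) + lam ≠ 0 := by
    intro h
    apply hx12
    rw [hx2e, h, zero_mul, add_zero]
  have hl1q : ((1 : K) + lam) ^ 2 ^ m = 1 + lam := by rw [hadd m, one_pow, hlamq]
  obtain ⟨X1, hX1⟩ : ∃ X : K, xx A ^ 2 ^ m = X := ⟨_, rfl⟩
  obtain ⟨U, hU1⟩ : ∃ u : K, u1 ^ 2 ^ m = u := ⟨_, rfl⟩
  have hXC : xx C ^ 2 ^ m = X1 + (1 + lam) * U := by
    rw [hx2e, hadd m, mul_pow, hl1q, hX1, hU1]
  have hXE : xx E ^ 2 ^ m = X1 + lam * U := by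
    rw [hx3e, hadd m, mul_pow, hlamq, hX1, hU1]
  simp only [pow_succ] at E1
  rw [hX1, hXC, hXE] at E1
  rw [hx2e, hx3e] at E1
  have hbig : u1 * (lam * (1 + lam) * (a * u1 ^ 2 + b * (U * u1)))
      = u1 * (rr A + lam * rr C + (1 + lam) * rr e1) := by
    linear_combination (-1 : K) * E1 +
      (u1 * lam * rr A + u1 ^ 2 * U * lam * b + 2 * u1 ^ 2 * U * lam ^ 2 * b
        + u1 ^ 2 * U * lam ^ 3 * b + u1 ^ 3 * lam * a + 2 * u1 ^ 3 * lam ^ 2 * a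
        + u1 ^ 3 * lam ^ 3 * a + X1 * u1 ^ 2 * lam * b + X1 * u1 ^ 2 * lam ^ 2 * b
        + xx A * rr e1 + xx A * rr C + xx A * rr A + xx A * u1 * U * b
        + 3 * xx A * u1 * U * lam * b + 3 * xx A * u1 * U * lam ^ 2 * b
        + xx A * u1 ^ 2 * a + 4 * xx A * u1 ^ 2 * lam * a + 4 * xx A * u1 ^ 2 * lam ^ 2 * a
        + 2 * xx A * X1 * u1 * b + 4 * xx A * X1 * u1 * lam * b + xx A ^ 2 * U * b
        + 2 * xx A ^ 2 * U * lam * b + 3 * xx A ^ 2 * u1 * a + 6 * xx A ^ 2 * u1 * lam * a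
        + 3 * xx A ^ 2 * X1 * b + 3 * xx A ^ 3 * a) * h2
  have hfin := mul_left_cancel₀ hu1ne hbig
  have hpu : u1 ^ (2 ^ m + 1) = U * u1 := by rw [pow_succ, hU1]
  have hFq : (a * u1 ^ 2 + b * u1 ^ (2 ^ m + 1)) ^ 2 ^ m
      = a * u1 ^ 2 + b * u1 ^ (2 ^ m + 1) := by
    have hF : a * u1 ^ 2 + b * u1 ^ (2 ^ m + 1)
        = (rr A + lam * rr C + (1 + lam) * rr e1) / (lam * (1 + lam)) := by
      rw [eq_div_iff (mul_ne_zero hlam0 hl1ne), hpu]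
      linear_combination hfin
    rw [hF, div_pow]
    congr 1
    · rw [hadd m, hadd m, mul_pow, mul_pow, hlamq, hl1q, hrr A, hrr C, hrr e1]
    · rw [mul_pow, hlamq, hl1q]
  exact fano_core m K hchar a b u1 ha hb hu1ne hcardK hdisc hFq
end

section
/- Let q = 2^m > 2, let s, t ∈ F_q* with s ≠ t, h ∈ F_{q²} with h ∉ {0,1} and s + ht ≠ 0, and let θ ∈ F_{q²}*. Suppose k, k' ∈ F_{q²} and b₁, b₁' ∈ F_q satisfy Tr((θh)²) + b₁(θh)^{q+1} = Tr(kh), Tr(θ²) + b₁θ^{q+1} = Tr(k), Tr((θh)²) + b₁'(θh)^{q+1} = Tr(k'h), Tr(θ²) + b₁'θ^{q+1} = Tr(k'), where Tr(x) = x + x^q. Set W = h(s+t)/(s+ht). Then (k + k')W + (k^q + (k')^q)W^q = (b₁ + b₁') θ^{q+1} W^{q+1}. -/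
/-- key identity: Let `q = 2^m > 2`, `s, t ∈ F_q*`, `s ≠ t`,
`h ∉ {0,1}` with `s + ht ≠ 0`, `θ ∈ F_{q²}*`, and suppose `k, k' ∈ F_{q²}`,
`b₁, b₁' ∈ F_q` satisfy the four trace equations
`Tr((θh)²) + b₁(θh)^{q+1} = Tr(kh)`, `Tr(θ²) + b₁θ^{q+1} = Tr(k)`,
`Tr((θh)²) + b₁'(θh)^{q+1} = Tr(k'h)`, `Tr(θ²) + b₁'θ^{q+1} = Tr(k')`,
with `Tr(x) = x + x^q`.  Then for `W = h(s+t)/(s+ht)` one has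
`(k + k')W + (k^q + (k')^q)W^q = (b₁ + b₁') θ^{q+1} W^{q+1}`. -/
theorem fano_bm_stmt16 (m : ℕ) (hm : 2 ≤ m) (K : Type) [Field K] [Fintype K]
    (hK : Fintype.card K = (2 ^ m) ^ 2) (s t h θ k k' b₁ b₁' : K)
    (hs : s ≠ 0) (ht : t ≠ 0) (hst : s ≠ t)
    (hsF : s ^ (2 ^ m) = s) (htF : t ^ (2 ^ m) = t)
    (hh0 : h ≠ 0) (hh1 : h ≠ 1) (hden : s + h * t ≠ 0) (hθ : θ ≠ 0)
    (hb₁ : b₁ ^ (2 ^ m) = b₁) (hb₁' : b₁' ^ (2 ^ m) = b₁')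
    (e1 : (θ * h) ^ 2 + ((θ * h) ^ 2) ^ (2 ^ m) + b₁ * (θ * h) ^ (2 ^ m + 1)
        = k * h + (k * h) ^ (2 ^ m))
    (e2 : θ ^ 2 + (θ ^ 2) ^ (2 ^ m) + b₁ * θ ^ (2 ^ m + 1)
        = k + k ^ (2 ^ m))
    (e3 : (θ * h) ^ 2 + ((θ * h) ^ 2) ^ (2 ^ m) + b₁' * (θ * h) ^ (2 ^ m + 1)
        = k' * h + (k' * h) ^ (2 ^ m))
    (e4 : θ ^ 2 + (θ ^ 2) ^ (2 ^ m) + b₁' * θ ^ (2 ^ m + 1)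
        = k' + k' ^ (2 ^ m)) :
    (k + k') * (h * (s + t) / (s + h * t))
      + (k ^ (2 ^ m) + k' ^ (2 ^ m)) * (h * (s + t) / (s + h * t)) ^ (2 ^ m)
      = (b₁ + b₁') * θ ^ (2 ^ m + 1)
          * (h * (s + t) / (s + h * t)) ^ (2 ^ m + 1) := by
  -- characteristic 2
  have hchar : CharP K 2 := by
    have hp : (ringChar K).Prime := CharP.char_is_prime K _
    obtain ⟨n, hn⟩ := FiniteField.card K (ringChar K)
    have hd : ringChar K ∣ 2 ^ (m * 2) := by
      rw [← pow_mul] at hK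
      rw [← hK, hn.2]
      exact dvd_pow_self (ringChar K) n.ne_zero
    have h2 : ringChar K = 2 :=
      (Nat.prime_dvd_prime_iff_eq hp Nat.prime_two).mp (hp.dvd_of_dvd_pow hd)
    exact h2 ▸ ringChar.charP K
  haveI := hchar
  haveI : Fact (Nat.Prime 2) := ⟨Nat.prime_two⟩
  have htwo : (2 : K) = 0 := by exact_mod_cast CharP.cast_eq_zero K 2
  have hF : ∀ a b : K, (a + b) ^ (2 ^ m) = a ^ (2 ^ m) + b ^ (2 ^ m) :=
    fun a b => add_pow_char_pow ..
  set q := 2 ^ m with hq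
  set u := k + k' with hu
  set β := b₁ + b₁' with hβ
  have hkq : u ^ q = k ^ q + k' ^ q := hF k k'
  have hA2 : β * θ ^ (q + 1) = u + u ^ q := by
    rw [hkq]
    linear_combination e2 + e4 - (θ ^ 2 + (θ ^ 2) ^ q) * htwo
  have hA1 : β * θ ^ (q + 1) * (h ^ q * h) = u * h + u ^ q * h ^ q := by
    have m1 : (k * h) ^ q = k ^ q * h ^ q := mul_pow k h q
    have m2 : (k' * h) ^ q = k' ^ q * h ^ q := mul_pow k' h q
    have m3 : (θ * h) ^ (q + 1) = θ ^ (q + 1) * (h ^ q * h) := by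
      rw [mul_pow, pow_succ θ, pow_succ h]
    rw [hkq, hu]
    rw [m1, m2, m3] at *
    linear_combination e1 + e3 - ((θ * h) ^ 2 + ((θ * h) ^ 2) ^ q) * htwo
  have key : u * (h + h ^ q) = β * θ ^ (q + 1) * (h ^ q * (h + 1)) := by
    linear_combination -hA1 - h ^ q * hA2 - (u ^ q * h ^ q) * htwo
  have hd2 : s + h ^ q * t ≠ 0 := by
    have : (s + h * t) ^ q = s + h ^ q * t := by rw [hF, mul_pow, hsF, htF]
    rw [← this]; exact pow_ne_zero _ hden
  have hWq : (h * (s + t) / (s + h * t)) ^ q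
      = h ^ q * (s + t) / (s + h ^ q * t) := by
    rw [div_pow, mul_pow, hF s t, hsF, htF, hF, mul_pow, hsF, htF]
  have hA : θ ^ (q + 1) ≠ 0 := pow_ne_zero _ hθ
  have huval : u ^ q = β * θ ^ (q + 1) + u := by
    linear_combination -hA2 - u * htwo
  have hgoal : u * (h * (s + t) / (s + h * t))
      + u ^ q * (h * (s + t) / (s + h * t)) ^ q
      = β * θ ^ (q + 1) * (h * (s + t) / (s + h * t)) ^ (q + 1) := by
    have hWq1 : (h * (s + t) / (s + h * t)) ^ (q + 1)
        = h ^ q * (s + t) / (s + h ^ q * t) * (h * (s + t) / (s + h * t)) := by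
      rw [pow_succ, hWq]
    rw [hWq1, hWq, huval]
    by_cases hD : h + h ^ q = 0
    · -- h ∈ F_q : h^q = h, and then β = 0
      have hhq : h ^ q = h := by linear_combination hD - h * htwo
      have hh1' : h + 1 ≠ 0 := by
        intro hc; exact hh1 (by linear_combination hc - htwo)
      have hβ0 : β = 0 := by
        by_contra hβn
        exact (mul_ne_zero (mul_ne_zero hβn hA)
          (mul_ne_zero (pow_ne_zero q hh0) hh1'))
          (by linear_combination -key + u * hD)
      rw [hhq, hβ0]
      ring_nf
      linear_combination (u * (h * (s + t) / (s + h * t))) * htwo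
    · -- generic case
      have poly : u * (h * (s + t)) * (s + h ^ q * t)
          + (β * θ ^ (q + 1) + u) * (h ^ q * (s + t)) * (s + h * t)
          = β * θ ^ (q + 1) * (h ^ q * (s + t)) * (h * (s + t)) := by
        linear_combination (s * (s + t)) * key
          + (u * h * h ^ q * t * (s + t) + β * θ ^ (q + 1) * h ^ q * s * (s + t)) * htwo
      rw [mul_div_assoc', mul_div_assoc', div_add_div _ _ hden hd2, div_mul_div_comm, mul_div_assoc',
        div_eq_div_iff (mul_ne_zero hden hd2) (mul_ne_zero hd2 hden)]
      linear_combination ((s + h ^ q * t) * (s + h * t)) * poly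
  calc (k + k') * (h * (s + t) / (s + h * t))
      + (k ^ q + k' ^ q) * (h * (s + t) / (s + h * t)) ^ q
      = u * (h * (s + t) / (s + h * t))
        + u ^ q * (h * (s + t) / (s + h * t)) ^ q := by rw [hkq]
    _ = _ := hgoal
end
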